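/- arXiv:1207.2248 — 2 statements merged into one kernel-verified Lean document; each statement's English description precedes it below -/
import Mathlib

section
/- There exists a non-increasing sequence (r_n) of non-negative reals converging to 0 such that limsup_n (1/log n) Σ_{j=1}^n r_j² < 1/2 but sup_n n r_n² = ∞, i.e. (r_n) does not belong to the Lorentz space ℓ_{2,∞}. -/
open Filter

set_option maxRecDepth 8000


lemma mex_exists (n : ℕ) : ∃ M, n ≤ 2 ^ M ^ 3 :=
  ⟨n, (Nat.lt_two_pow_self (n := n)).le.trans (Nat.pow_le_pow_right (by norm_num)
    (Nat.le_self_pow three_ne_zero n))⟩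

noncomputable def mex (n : ℕ) : ℕ := max 1 (Nat.find (mex_exists n))

lemma one_le_mex (n : ℕ) : 1 ≤ mex n := le_max_left _ _

lemma le_pow_mex (n : ℕ) : n ≤ 2 ^ (mex n) ^ 3 :=
  (Nat.find_spec (mex_exists n)).trans (Nat.pow_le_pow_right (by norm_num)
    (Nat.pow_le_pow_left (le_max_right _ _) 3))

lemma mex_mono : Monotone mex := fun a b hab =>
  max_le_max le_rfl (Nat.find_mono fun M hM => hab.trans hM)

lemma mex_gt {n M : ℕ} (h : 2 ^ M ^ 3 < n) : M + 1 ≤ mex n := by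
  have : M + 1 ≤ Nat.find (mex_exists n) := by
    by_contra hc
    push_neg at hc
    exact absurd ((Nat.find_spec (mex_exists n)).trans
      (Nat.pow_le_pow_right (by norm_num) (Nat.pow_le_pow_left (Nat.lt_succ_iff.mp hc) 3)))
      (not_le.mpr h)
  exact this.trans (le_max_right _ _)

lemma mex_pow {M : ℕ} (hM : 1 ≤ M) : mex (2 ^ M ^ 3) = M := by
  have h1 : Nat.find (mex_exists (2 ^ M ^ 3)) ≤ M := Nat.find_le le_rfl
  have h2 : M ≤ mex (2 ^ M ^ 3) := by
    rcases Nat.eq_or_lt_of_le hM with h | h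
    · exact h ▸ one_le_mex _
    · have : 2 ^ (M - 1) ^ 3 < 2 ^ M ^ 3 :=
        Nat.pow_lt_pow_right (by norm_num) (Nat.pow_lt_pow_left (by omega) three_ne_zero)
      have := mex_gt this
      omega
  exact le_antisymm (max_le hM h1) h2

lemma lt_of_mex {n : ℕ} (h : 2 ≤ mex n) : 2 ^ (mex n - 1) ^ 3 < n := by
  have hf : mex n = Nat.find (mex_exists n) := by
    have := one_le_mex n; unfold mex at *; omega
  by_contra hc
  push_neg at hc
  have := Nat.find_min (mex_exists n) (m := mex n - 1) (by omega)
  exact this hc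

noncomputable def gq (M : ℕ) : ℝ := (M : ℝ) / 2 ^ M ^ 3

lemma gq_nonneg (M : ℕ) : 0 ≤ gq M := by
  unfold gq; positivity

lemma gq_anti {a b : ℕ} (ha : 1 ≤ a) (hab : a ≤ b) : gq b ≤ gq a := by
  induction b, hab using Nat.le_induction with
  | base => exact le_rfl
  | succ b hb ih =>
    refine le_trans ?_ ih
    unfold gq
    rw [div_le_div_iff₀ (by positivity) (by positivity)]
    have key : ((b : ℝ) + 1) * 2 ^ b ^ 3 ≤ (b : ℝ) * 2 ^ (b + 1) ^ 3 := by
      have hb1 : (1 : ℝ) ≤ (b : ℝ) := by exact_mod_cast ha.trans hb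
      have hexp : (b + 1) ^ 3 = b ^ 3 + (3 * b ^ 2 + 3 * b + 1) := by ring
      rw [hexp, pow_add]
      have h2 : (2 : ℝ) ≤ 2 ^ (3 * b ^ 2 + 3 * b + 1) := by
        calc (2:ℝ) = 2 ^ 1 := by norm_num
        _ ≤ 2 ^ (3 * b ^ 2 + 3 * b + 1) := by
            apply pow_le_pow_right₀ (by norm_num); omega
      calc ((b : ℝ) + 1) * 2 ^ b ^ 3 ≤ ((b:ℝ) * 2) * 2 ^ b ^ 3 := by nlinarith [pow_pos (show (0:ℝ) < 2 by norm_num) (b^3)]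
      _ = (b:ℝ) * (2 ^ b ^ 3 * 2) := by ring
      _ ≤ (b:ℝ) * (2 ^ b ^ 3 * 2 ^ (3 * b ^ 2 + 3 * b + 1)) := by
          gcongr
    push_cast
    linarith [key]

noncomputable def rr (n : ℕ) : ℝ := Real.sqrt (gq (mex n))

lemma rr_nonneg (n : ℕ) : 0 ≤ rr n := Real.sqrt_nonneg _

lemma rr_sq (n : ℕ) : rr n ^ 2 = gq (mex n) := Real.sq_sqrt (gq_nonneg _)

lemma rr_anti : Antitone rr := fun a b hab =>
  Real.sqrt_le_sqrt (gq_anti (one_le_mex a) (mex_mono hab))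

lemma sum_pow_le {M : ℕ} (hM : 1 ≤ M) :
    ∑ j ∈ Finset.Ioc 0 (2 ^ M ^ 3), rr j ^ 2 ≤ (M : ℝ) ^ 2 := by
  induction M, hM using Nat.le_induction with
  | base =>
    have hb : ∀ j ∈ Finset.Ioc 0 (2 ^ 1 ^ 3), rr j ^ 2 ≤ gq 1 := by
      intro j _
      rw [rr_sq]
      exact gq_anti le_rfl (one_le_mex j)
    calc ∑ j ∈ Finset.Ioc 0 (2 ^ 1 ^ 3), rr j ^ 2 ≤ ∑ _j ∈ Finset.Ioc 0 (2 ^ 1 ^ 3), gq 1 :=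
          Finset.sum_le_sum hb
      _ = 2 * gq 1 := by norm_num
      _ ≤ ((1 : ℕ) : ℝ) ^ 2 := by unfold gq; norm_num
  | succ M hM ih =>
    have hsplit := Finset.sum_Ioc_consecutive (fun j => rr j ^ 2)
      (Nat.zero_le (2 ^ M ^ 3))
      (Nat.pow_le_pow_right (by norm_num) (Nat.pow_le_pow_left (Nat.le_succ M) 3))
    rw [← hsplit]
    have hblock : ∀ j ∈ Finset.Ioc (2 ^ M ^ 3) (2 ^ (M + 1) ^ 3), rr j ^ 2 = gq (M + 1) := by
      intro j hj
      rw [Finset.mem_Ioc] at hj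
      have h1 : M + 1 ≤ mex j := mex_gt hj.1
      have h2 : mex j ≤ M + 1 := by
        have := mex_mono hj.2
        rwa [mex_pow (by omega)] at this
      rw [rr_sq, le_antisymm h2 h1]
    have hbsum : ∑ j ∈ Finset.Ioc (2 ^ M ^ 3) (2 ^ (M + 1) ^ 3), rr j ^ 2 ≤ (M : ℝ) + 1 := by
      rw [Finset.sum_congr rfl hblock, Finset.sum_const, Nat.card_Ioc, nsmul_eq_mul]
      unfold gq
      have hcard : ((2 ^ (M + 1) ^ 3 - 2 ^ M ^ 3 : ℕ) : ℝ) ≤ (2 : ℝ) ^ (M + 1) ^ 3 := by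
        calc ((2 ^ (M + 1) ^ 3 - 2 ^ M ^ 3 : ℕ) : ℝ) ≤ ((2 ^ (M + 1) ^ 3 : ℕ) : ℝ) := by
              exact_mod_cast Nat.sub_le _ _
          _ = (2 : ℝ) ^ (M + 1) ^ 3 := by push_cast; ring
      calc ((2 ^ (M + 1) ^ 3 - 2 ^ M ^ 3 : ℕ) : ℝ) * ((M + 1 : ℕ) / 2 ^ (M + 1) ^ 3)
          ≤ (2 : ℝ) ^ (M + 1) ^ 3 * (((M : ℝ) + 1) / 2 ^ (M + 1) ^ 3) := by
            push_cast
            gcongr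
        _ = (M : ℝ) + 1 := by field_simp
    calc ∑ j ∈ Finset.Ioc 0 (2 ^ M ^ 3), rr j ^ 2
          + ∑ j ∈ Finset.Ioc (2 ^ M ^ 3) (2 ^ (M + 1) ^ 3), rr j ^ 2
        ≤ (M : ℝ) ^ 2 + ((M : ℝ) + 1) := add_le_add ih hbsum
      _ ≤ ((M : ℕ) + 1 : ℝ) ^ 2 := by push_cast; nlinarith [Nat.cast_nonneg (α := ℝ) M]
      _ = (((M + 1 : ℕ)) : ℝ) ^ 2 := by push_cast; ring

lemma sum_le_sq_mex (n : ℕ) :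
    ∑ j ∈ Finset.Icc 1 n, rr j ^ 2 ≤ ((mex n : ℝ)) ^ 2 := by
  rw [show (1 : ℕ) = 0 + 1 from rfl, Finset.Icc_add_one_left_eq_Ioc]
  calc ∑ j ∈ Finset.Ioc 0 n, rr j ^ 2 ≤ ∑ j ∈ Finset.Ioc 0 (2 ^ (mex n) ^ 3), rr j ^ 2 := by
        apply Finset.sum_le_sum_of_subset_of_nonneg
        · exact Finset.Ioc_subset_Ioc le_rfl (le_pow_mex n)
        · intro i _ _; positivity
    _ ≤ ((mex n : ℝ)) ^ 2 := sum_pow_le (one_le_mex n)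

lemma mex_tendsto : Tendsto mex atTop atTop :=
  tendsto_atTop_atTop_of_monotone mex_mono fun b =>
    ⟨2 ^ b ^ 3 + 1, by have := mex_gt (n := 2 ^ b ^ 3 + 1) (M := b) (by omega); omega⟩

lemma gq_le (M : ℕ) : gq M ≤ 2 * (1 / 2) ^ M := by
  unfold gq
  have hnat : M * 2 ^ M ≤ 2 * 2 ^ M ^ 3 := by
    calc M * 2 ^ M ≤ 2 ^ M * 2 ^ M := Nat.mul_le_mul_right _ (Nat.lt_two_pow_self (n := M)).le
      _ = 2 ^ (2 * M) := by rw [← pow_add]; ring_nf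
      _ ≤ 2 ^ (M ^ 3 + 1) := by
          apply Nat.pow_le_pow_right (by norm_num)
          rcases Nat.lt_or_ge M 2 with h | h
          · interval_cases M <;> norm_num
          · calc 2 * M ≤ M * M := Nat.mul_le_mul_right M h
              _ ≤ M * M * M := Nat.le_mul_of_pos_right _ (by omega)
              _ = M ^ 3 := by ring
              _ ≤ M ^ 3 + 1 := Nat.le_succ _
      _ = 2 * 2 ^ M ^ 3 := by ring
  have hcast : (M : ℝ) * 2 ^ M ≤ 2 * 2 ^ M ^ 3 := by exact_mod_cast hnat
  rw [div_le_iff₀ (by positivity)]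
  calc (M : ℝ) ≤ 2 * 2 ^ M ^ 3 / 2 ^ M := by
        rw [le_div_iff₀ (by positivity)]; linarith
    _ = 2 * (1 / 2) ^ M * 2 ^ M ^ 3 := by
        rw [div_pow, one_pow]; field_simp

lemma gq_tendsto : Tendsto gq atTop (nhds 0) := by
  have hg : Tendsto (fun M : ℕ => 2 * (1 / 2 : ℝ) ^ M) atTop (nhds 0) := by
    have := (tendsto_pow_atTop_nhds_zero_of_lt_one (by norm_num : (0:ℝ) ≤ 1/2)
      (by norm_num : (1/2 : ℝ) < 1)).const_mul (2 : ℝ)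
    simpa using this
  exact squeeze_zero gq_nonneg gq_le hg

lemma rr_tendsto : Tendsto rr atTop (nhds 0) := by
  have h : Tendsto (fun n => gq (mex n)) atTop (nhds 0) := gq_tendsto.comp mex_tendsto
  have := h.sqrt
  simp only [Real.sqrt_zero] at this; exact this


/-- There is a non-increasing nonnegative null sequence `(r_n)` with
`limsup (1/log n) Σ_{j=1}^n r_j² < 1/2` which does not belong to the Lorentz space
`ℓ_{2,∞}`, i.e. `sup_n n r_n² = ∞`. -/
theorem exists_mon_not_lorentz :
    ∃ r : ℕ → ℝ, (∀ n, 0 ≤ r n) ∧ Antitone r ∧ Tendsto r atTop (nhds 0) ∧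
      Filter.limsup
          (fun n : ℕ =>
            (((1 / Real.log n) * ∑ j ∈ Finset.Icc 1 n, r j ^ 2 : ℝ) : EReal)) atTop
        < ((1 : ℝ) / 2 : EReal) ∧
      ∀ K : ℝ, ∃ n : ℕ, K ≤ (n : ℝ) * r n ^ 2 := by
  refine ⟨rr, rr_nonneg, rr_anti, rr_tendsto, ?_, ?_⟩
  · have hev : ∀ᶠ n : ℕ in atTop,
        (((1 / Real.log n) * ∑ j ∈ Finset.Icc 1 n, rr j ^ 2 : ℝ) : EReal)
          ≤ (((1 : ℝ) / 4 : ℝ) : EReal) := by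
      filter_upwards [eventually_gt_atTop (2 ^ 9 ^ 3)] with n hn
      have hM10 : 10 ≤ mex n := mex_gt hn
      set M := mex n with hMdef
      have hlt2 : 2 ^ (M - 1) ^ 3 < n := lt_of_mex (by omega)
      have hn1 : (1 : ℝ) < (n : ℝ) := by
        have : 1 < n := by have := Nat.one_le_two_pow (n := 9 ^ 3); omega
        exact_mod_cast this
      have hL : 0 < Real.log n := Real.log_pos hn1
      have hpowle : (2 : ℝ) ^ ((M - 1) ^ 3) ≤ (n : ℝ) := by
        exact_mod_cast hlt2.le
      have hlog : ((M - 1 : ℕ) : ℝ) ^ 3 * Real.log 2 ≤ Real.log n := by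
        have := Real.log_le_log (by positivity) hpowle
        rwa [Real.log_pow, Nat.cast_pow] at this
      rw [EReal.coe_le_coe_iff]
      rw [div_mul_eq_mul_div, div_le_iff₀ hL, one_mul]
      have hS : ∑ j ∈ Finset.Icc 1 n, rr j ^ 2 ≤ ((M : ℝ)) ^ 2 := sum_le_sq_mex n
      have hMcast : (10 : ℝ) ≤ (M : ℝ) := by exact_mod_cast hM10
      have hsub : ((M - 1 : ℕ) : ℝ) = (M : ℝ) - 1 := by
        have : 1 ≤ M := by omega
        push_cast [this]; ring
      have hkey : ((M : ℝ)) ^ 2 ≤ 1 / 4 * (((M : ℝ) - 1) ^ 3 * Real.log 2) := by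
        have hl2 : (3/5 : ℝ) < Real.log 2 := lt_trans (by norm_num) Real.log_two_gt_d9
        have hcube : (0:ℝ) ≤ ((M : ℝ) - 1) ^ 3 := pow_nonneg (by linarith) 3
        have step1 : ((M : ℝ)) ^ 2 ≤ 1 / 4 * (((M : ℝ) - 1) ^ 3 * (3/5)) := by
          nlinarith [mul_nonneg (sub_nonneg.mpr hMcast) (sq_nonneg (M : ℝ)),
            sq_nonneg ((M : ℝ) - 10), sq_nonneg (M : ℝ), mul_nonneg (sub_nonneg.mpr hMcast) (sq_nonneg ((M:ℝ) - 10))]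
        refine step1.trans ?_
        have := mul_le_mul_of_nonneg_left hl2.le hcube
        linarith
      calc ∑ j ∈ Finset.Icc 1 n, rr j ^ 2 ≤ ((M : ℝ)) ^ 2 := hS
        _ ≤ 1 / 4 * (((M : ℝ) - 1) ^ 3 * Real.log 2) := hkey
        _ ≤ 1 / 4 * Real.log n := by
            rw [← hsub]
            linarith [hlog]
    have hle := Filter.limsup_le_of_le (by isBoundedDefault) hev
    refine lt_of_le_of_lt hle ?_
    rw [show ((1 : ℝ) / 2 : EReal) = (((1:ℝ)/2 : ℝ) : EReal) by norm_cast]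
    exact_mod_cast (by norm_num : ((1:ℝ)/4) < 1/2)
  · intro K
    refine ⟨2 ^ (max 10 ⌈K⌉₊) ^ 3, ?_⟩
    set M := max 10 ⌈K⌉₊ with hMdef
    have h1 : mex (2 ^ M ^ 3) = M := mex_pow (le_trans (by norm_num) (le_max_left 10 ⌈K⌉₊))
    rw [rr_sq, h1]
    unfold gq
    have heq : ((2 ^ M ^ 3 : ℕ) : ℝ) * ((M : ℝ) / 2 ^ M ^ 3) = (M : ℝ) := by
      push_cast
      field_simp
    rw [heq]
    calc K ≤ (⌈K⌉₊ : ℝ) := Nat.le_ceil K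
      _ ≤ (M : ℝ) := by exact_mod_cast le_max_right 10 ⌈K⌉₊
end

section
/- For every z in ℓ₂ with ‖z‖∞ < 1 and every family (c_α)_{α ∈ ℕ₀^(ℕ)} of complex numbers with Σ_α |c_α|² < ∞, we have Σ_α |c_α z^α| ≤ (Σ_α |c_α|²)^{1/2} · (Π_{n=1}^∞ 1/(1 − |z_n|²))^{1/2} < ∞. -/
open Finset

private lemma key_bound {r : ℕ → ℝ} (hr0 : ∀ n, 0 ≤ r n) (hr1 : ∀ n, r n < 1) :
    ∀ (N : Finset ℕ) (S : Finset (ℕ →₀ ℕ)), (∀ α ∈ S, α.support ⊆ N) →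
      ∑ α ∈ S, ∏ n ∈ N, r n ^ α n ≤ ∏ n ∈ N, (1 - r n)⁻¹ := by
  intro N
  induction N using Finset.induction with
  | empty =>
    intro S hS
    have hsub : S ⊆ {0} := by
      intro α hα
      simp only [Finset.mem_singleton]
      exact Finsupp.support_eq_empty.mp (Finset.subset_empty.mp (hS α hα))
    calc ∑ α ∈ S, ∏ n ∈ (∅ : Finset ℕ), r n ^ α n
        ≤ ∑ α ∈ ({0} : Finset (ℕ →₀ ℕ)), ∏ n ∈ (∅ : Finset ℕ), r n ^ α n := by
          apply Finset.sum_le_sum_of_subset_of_nonneg hsub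
          intro i _ _
          exact Finset.prod_nonneg fun n _ => pow_nonneg (hr0 n) _
      _ = 1 := by simp
      _ = ∏ n ∈ (∅ : Finset ℕ), (1 - r n)⁻¹ := by simp
  | @insert a N' ha IH =>
    intro S hS
    have hpos : (0 : ℝ) < 1 - r a := by linarith [hr1 a]
    have hinj : ∀ α ∈ S, ∀ β ∈ S,
        ((α a, Finsupp.erase a α) : ℕ × (ℕ →₀ ℕ)) = (β a, Finsupp.erase a β) → α = β := by
      intro α _ β _ h
      have h1 : α a = β a := congrArg Prod.fst h
      have h2 : Finsupp.erase a α = Finsupp.erase a β := congrArg Prod.snd h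
      ext n
      rcases eq_or_ne n a with rfl | hn
      · exact h1
      · have := congrArg (fun f : ℕ →₀ ℕ => f n) h2
        simpa [Finsupp.erase_ne hn] using this
    have step1 : ∑ α ∈ S, ∏ n ∈ insert a N', r n ^ α n
        = ∑ p ∈ S.image (fun α => ((α a, Finsupp.erase a α) : ℕ × (ℕ →₀ ℕ))),
            r a ^ p.1 * ∏ n ∈ N', r n ^ p.2 n := by
      rw [Finset.sum_image hinj]
      refine Finset.sum_congr rfl fun α _ => ?_
      rw [Finset.prod_insert ha]
      congr 1
      refine Finset.prod_congr rfl fun n hn => ?_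
      rw [Finsupp.erase_ne (fun h : n = a => ha (by rw [← h]; exact hn))]
    set K : Finset ℕ := S.image (fun α => α a) with hK
    set T : Finset (ℕ →₀ ℕ) := S.image (Finsupp.erase a) with hT
    have hsubKT : S.image (fun α => ((α a, Finsupp.erase a α) : ℕ × (ℕ →₀ ℕ))) ⊆ K ×ˢ T := by
      intro p hp
      obtain ⟨α, hα, rfl⟩ := Finset.mem_image.mp hp
      exact Finset.mem_product.mpr ⟨Finset.mem_image_of_mem _ hα, Finset.mem_image_of_mem _ hα⟩
    have hterm_nonneg : ∀ p : ℕ × (ℕ →₀ ℕ), 0 ≤ r a ^ p.1 * ∏ n ∈ N', r n ^ p.2 n := by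
      intro p
      exact mul_nonneg (pow_nonneg (hr0 a) _)
        (Finset.prod_nonneg fun n _ => pow_nonneg (hr0 n) _)
    have step2 : ∑ p ∈ S.image (fun α => ((α a, Finsupp.erase a α) : ℕ × (ℕ →₀ ℕ))),
          r a ^ p.1 * ∏ n ∈ N', r n ^ p.2 n
        ≤ (∑ k ∈ K, r a ^ k) * ∑ β ∈ T, ∏ n ∈ N', r n ^ β n := by
      calc ∑ p ∈ S.image (fun α => ((α a, Finsupp.erase a α) : ℕ × (ℕ →₀ ℕ))),
            r a ^ p.1 * ∏ n ∈ N', r n ^ p.2 n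
          ≤ ∑ p ∈ K ×ˢ T, r a ^ p.1 * ∏ n ∈ N', r n ^ p.2 n :=
            Finset.sum_le_sum_of_subset_of_nonneg hsubKT fun p _ _ => hterm_nonneg p
        _ = (∑ k ∈ K, r a ^ k) * ∑ β ∈ T, ∏ n ∈ N', r n ^ β n := by
            rw [Finset.sum_product, Finset.sum_mul_sum]
    have hgeo : ∑ k ∈ K, r a ^ k ≤ (1 - r a)⁻¹ := by
      calc ∑ k ∈ K, r a ^ k ≤ ∑' k : ℕ, r a ^ k :=
            Summable.sum_le_tsum K (fun k _ => pow_nonneg (hr0 a) k)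
              (summable_geometric_of_lt_one (hr0 a) (hr1 a))
        _ = (1 - r a)⁻¹ := tsum_geometric_of_lt_one (hr0 a) (hr1 a)
    have hTbound : ∑ β ∈ T, ∏ n ∈ N', r n ^ β n ≤ ∏ n ∈ N', (1 - r n)⁻¹ := by
      apply IH
      intro β hβ
      obtain ⟨α, hα, rfl⟩ := Finset.mem_image.mp hβ
      intro n hn
      have hna : n ≠ a := by
        intro h
        exact (Finsupp.notMem_support_iff.mpr (by simp [h])) hn
      have : n ∈ α.support := by
        rw [Finsupp.mem_support_iff] at hn ⊢
        rwa [Finsupp.erase_ne hna] at hn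
      have := hS α hα this
      rcases Finset.mem_insert.mp this with h | h
      · exact absurd h hna
      · exact h
    have hT_nonneg : 0 ≤ ∑ β ∈ T, ∏ n ∈ N', r n ^ β n :=
      Finset.sum_nonneg fun β _ => Finset.prod_nonneg fun n _ => pow_nonneg (hr0 n) _
    calc ∑ α ∈ S, ∏ n ∈ insert a N', r n ^ α n
        ≤ (∑ k ∈ K, r a ^ k) * ∑ β ∈ T, ∏ n ∈ N', r n ^ β n := by rw [step1]; exact step2
      _ ≤ (1 - r a)⁻¹ * ∏ n ∈ N', (1 - r n)⁻¹ := by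
          apply mul_le_mul hgeo hTbound hT_nonneg (le_of_lt (inv_pos.mpr hpos))
      _ = ∏ n ∈ insert a N', (1 - r n)⁻¹ := by rw [Finset.prod_insert ha]

private lemma prod_le_tprod_real {f : ℕ → ℝ} (hf : ∀ n, (1 : ℝ) ≤ f n)
    (hm : Multipliable f) (s : Finset ℕ) : ∏ n ∈ s, f n ≤ ∏' n, f n := by
  refine ge_of_tendsto hm.hasProd ?_
  filter_upwards [Filter.eventually_ge_atTop s] with t ht
  have : ∏ n ∈ t, f n = (∏ n ∈ s, f n) * ∏ n ∈ t \ s, f n :=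
    (Finset.prod_sdiff ht).symm.trans (mul_comm _ _)
  rw [this]
  have h1 : (1 : ℝ) ≤ ∏ n ∈ t \ s, f n := by
    calc (1 : ℝ) = ∏ n ∈ t \ s, (1 : ℝ) := by simp
      _ ≤ ∏ n ∈ t \ s, f n :=
        Finset.prod_le_prod (fun n _ => zero_le_one) (fun n _ => hf n)
  have h2 : (0 : ℝ) ≤ ∏ n ∈ s, f n :=
    Finset.prod_nonneg fun n _ => le_trans zero_le_one (hf n)
  nlinarith

set_option maxHeartbeats 1000000 in
private lemma aux_main (ρ : ℕ → ℝ) (hρ0 : ∀ n, 0 ≤ ρ n) (s : ℝ) (hs1 : s < 1)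
    (hρs : ∀ n, ρ n ^ 2 ≤ s) (hsum : Summable fun n => ρ n ^ 2)
    (c : (ℕ →₀ ℕ) → ℂ) (hc : Summable fun α => ‖c α‖ ^ 2) :
    Summable (fun α : ℕ →₀ ℕ => ‖c α‖ * ∏ n ∈ α.support, ρ n ^ α n)
      ∧ (∑' α : ℕ →₀ ℕ, ‖c α‖ * ∏ n ∈ α.support, ρ n ^ α n)
        ≤ (∑' α : ℕ →₀ ℕ, ‖c α‖ ^ 2) ^ ((1 : ℝ) / 2) *
          (∏' n : ℕ, (1 - ρ n ^ 2)⁻¹) ^ ((1 : ℝ) / 2) := by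
  have hr0 : ∀ n, 0 ≤ ρ n ^ 2 := fun n => sq_nonneg _
  have hr1 : ∀ n, ρ n ^ 2 < 1 := fun n => lt_of_le_of_lt (hρs n) hs1
  have hs0 : 0 ≤ s := le_trans (hr0 0) (hρs 0)
  have hpos : ∀ n, (0 : ℝ) < 1 - ρ n ^ 2 := fun n => by linarith [hr1 n]
  have hginv_pos : ∀ n, (0 : ℝ) < (1 - ρ n ^ 2)⁻¹ := fun n => inv_pos.mpr (hpos n)
  have hg1 : ∀ n, (1 : ℝ) ≤ (1 - ρ n ^ 2)⁻¹ := fun n =>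
    (one_le_inv₀ (hpos n)).mpr (by linarith [hr0 n])
  -- multipliability
  have hlog_sum : Summable fun n => Real.log ((1 - ρ n ^ 2)⁻¹) := by
    apply Summable.of_nonneg_of_le (fun n => Real.log_nonneg (hg1 n))
      (fun n => ?_) (hsum.mul_right (1 - s)⁻¹)
    calc Real.log ((1 - ρ n ^ 2)⁻¹) ≤ (1 - ρ n ^ 2)⁻¹ - 1 :=
          Real.log_le_sub_one_of_pos (hginv_pos n)
      _ = ρ n ^ 2 / (1 - ρ n ^ 2) := by
          rw [eq_div_iff (ne_of_gt (hpos n)), sub_mul,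
            inv_mul_cancel₀ (ne_of_gt (hpos n))]
          ring
      _ ≤ ρ n ^ 2 / (1 - s) := by
          apply div_le_div_of_nonneg_left (hr0 n) (by linarith) (by linarith [hρs n])
      _ = ρ n ^ 2 * (1 - s)⁻¹ := div_eq_mul_inv _ _
  have hfg : (Real.exp ∘ fun n => Real.log ((1 - ρ n ^ 2)⁻¹)) =
      fun n => (1 - ρ n ^ 2)⁻¹ := by
    funext n; exact Real.exp_log (hginv_pos n)
  have hmul : Multipliable fun n => (1 - ρ n ^ 2)⁻¹ := by
    rw [← hfg]; exact hlog_sum.hasSum.rexp.multipliable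
  set C : ℝ := ∏' n : ℕ, (1 - ρ n ^ 2)⁻¹ with hC
  have hC1 : (1 : ℝ) ≤ C := by
    simpa using prod_le_tprod_real hg1 hmul (∅ : Finset ℕ)
  have hC0 : (0 : ℝ) ≤ C := le_trans zero_le_one hC1
  -- partial sums of F are bounded by C
  have hFb : ∀ S : Finset (ℕ →₀ ℕ),
      ∑ α ∈ S, ∏ n ∈ α.support, (ρ n ^ 2) ^ α n ≤ C := by
    intro S
    have h1 : ∀ α ∈ S, α.support ⊆ S.sup Finsupp.support := fun α hα => Finset.le_sup hα
    have h2 : ∑ α ∈ S, ∏ n ∈ α.support, (ρ n ^ 2) ^ α n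
        = ∑ α ∈ S, ∏ n ∈ S.sup Finsupp.support, (ρ n ^ 2) ^ α n := by
      refine Finset.sum_congr rfl fun α hα => ?_
      exact Finset.prod_subset (h1 α hα) (fun n _ hn => by
        rw [Finsupp.notMem_support_iff.mp hn, pow_zero])
    rw [h2]
    exact (key_bound hr0 hr1 _ S h1).trans (prod_le_tprod_real hg1 hmul _)
  have hF_nonneg : ∀ α : ℕ →₀ ℕ, 0 ≤ ∏ n ∈ α.support, (ρ n ^ 2) ^ α n :=
    fun α => Finset.prod_nonneg fun n _ => pow_nonneg (hr0 n) _
  have hFsummable : Summable (fun α : ℕ →₀ ℕ => ∏ n ∈ α.support, (ρ n ^ 2) ^ α n) :=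
    summable_of_sum_le hF_nonneg hFb
  -- b² = F
  have hb_sq : ∀ α : ℕ →₀ ℕ,
      (∏ n ∈ α.support, ρ n ^ α n) ^ 2 = ∏ n ∈ α.support, (ρ n ^ 2) ^ α n := by
    intro α
    rw [← Finset.prod_pow]
    exact Finset.prod_congr rfl fun n _ => by rw [← pow_mul, ← pow_mul, mul_comm]
  have hb_nonneg : ∀ α : ℕ →₀ ℕ, 0 ≤ ∏ n ∈ α.support, ρ n ^ α n :=
    fun α => Finset.prod_nonneg fun n _ => pow_nonneg (hρ0 n) _
  have ha_nonneg : ∀ α : ℕ →₀ ℕ, 0 ≤ ‖c α‖ := fun α => norm_nonneg _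
  -- summability of the product
  have hab_summable : Summable (fun α : ℕ →₀ ℕ =>
      ‖c α‖ * ∏ n ∈ α.support, ρ n ^ α n) := by
    apply Summable.of_nonneg_of_le
      (fun α => mul_nonneg (ha_nonneg α) (hb_nonneg α)) (fun α => ?_)
      ((hc.add hFsummable).mul_left (1 / 2))
    have h2 := two_mul_le_add_sq (‖c α‖) (∏ n ∈ α.support, ρ n ^ α n)
    rw [hb_sq α] at h2
    linarith
  refine ⟨hab_summable, ?_⟩
  set A : ℝ := ∑' α : ℕ →₀ ℕ, ‖c α‖ ^ 2 with hA
  have hA0 : 0 ≤ A := tsum_nonneg fun α => sq_nonneg _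
  apply Summable.tsum_le_of_sum_le hab_summable
  intro S
  have hCS : (∑ α ∈ S, ‖c α‖ * ∏ n ∈ α.support, ρ n ^ α n) ^ 2
      ≤ A * C := by
    calc (∑ α ∈ S, ‖c α‖ * ∏ n ∈ α.support, ρ n ^ α n) ^ 2
        ≤ (∑ α ∈ S, ‖c α‖ ^ 2) *
            ∑ α ∈ S, (∏ n ∈ α.support, ρ n ^ α n) ^ 2 :=
          Finset.sum_mul_sq_le_sq_mul_sq S _ _
      _ ≤ A * C := by
          apply mul_le_mul
          · exact Summable.sum_le_tsum S (fun α _ => sq_nonneg _) hc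
          · calc ∑ α ∈ S, (∏ n ∈ α.support, ρ n ^ α n) ^ 2
                = ∑ α ∈ S, ∏ n ∈ α.support, (ρ n ^ 2) ^ α n :=
                  Finset.sum_congr rfl fun α _ => hb_sq α
              _ ≤ C := hFb S
          · exact Finset.sum_nonneg fun α _ => sq_nonneg _
          · exact hA0
  have hS0 : 0 ≤ ∑ α ∈ S, ‖c α‖ * ∏ n ∈ α.support, ρ n ^ α n :=
    Finset.sum_nonneg fun α _ => mul_nonneg (ha_nonneg α) (hb_nonneg α)
  have : ∑ α ∈ S, ‖c α‖ * ∏ n ∈ α.support, ρ n ^ α n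
      ≤ Real.sqrt (A * C) := by
    exact Real.le_sqrt_of_sq_le hCS
  calc ∑ α ∈ S, ‖c α‖ * ∏ n ∈ α.support, ρ n ^ α n
      ≤ Real.sqrt (A * C) := this
    _ = A ^ ((1 : ℝ) / 2) * C ^ ((1 : ℝ) / 2) := by
        rw [Real.sqrt_mul hA0, Real.sqrt_eq_rpow, Real.sqrt_eq_rpow]

set_option maxHeartbeats 1000000 in
/-- For `z ∈ ℓ₂` with `‖z‖∞ < 1` and square-summable coefficients `(c_α)`,
`Σ_α |c_α z^α| ≤ (Σ_α |c_α|²)^{1/2} (Π_n 1/(1-|z_n|²))^{1/2} < ∞`. -/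
theorem cauchy_schwarz_monomials (z : ℕ → ℂ)
    (hz2 : Summable fun n => ‖z n‖ ^ 2)
    (hzsup : (⨆ n, ‖z n‖) < 1)
    (c : (ℕ →₀ ℕ) → ℂ) (hc : Summable fun α => ‖c α‖ ^ 2) :
    Summable (fun α : ℕ →₀ ℕ =>
        ‖c α‖ * ∏ n ∈ α.support, ‖z n‖ ^ α n)
      ∧ (∑' α : ℕ →₀ ℕ, ‖c α‖ * ∏ n ∈ α.support, ‖z n‖ ^ α n)
        ≤ (∑' α : ℕ →₀ ℕ, ‖c α‖ ^ 2) ^ ((1 : ℝ) / 2) *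
          (∏' n : ℕ, (1 - ‖z n‖ ^ 2)⁻¹) ^ ((1 : ℝ) / 2) := by
  have hρ0 : ∀ n, 0 ≤ ‖z n‖ := fun n => norm_nonneg _
  -- the sequence tends to 0, hence is bounded
  have htend : Filter.Tendsto (fun n => ‖z n‖) Filter.atTop (nhds 0) := by
    have h1 : Filter.Tendsto (fun n => ‖z n‖ ^ 2) Filter.atTop (nhds 0) :=
      hz2.tendsto_atTop_zero
    have h2 : Filter.Tendsto (fun n => Real.sqrt (‖z n‖ ^ 2))
        Filter.atTop (nhds (Real.sqrt 0)) := (Real.continuous_sqrt.tendsto 0).comp h1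
    simpa [Real.sqrt_sq (hρ0 _)] using h2
  have hbdd : BddAbove (Set.range fun n => ‖z n‖) := htend.bddAbove_range
  have hle : ∀ n, ‖z n‖ ≤ ⨆ n, ‖z n‖ := fun n => le_ciSup hbdd n
  have hsup0 : 0 ≤ ⨆ n, ‖z n‖ := le_trans (hρ0 0) (hle 0)
  exact aux_main (fun n => ‖z n‖) hρ0 ((⨆ n, ‖z n‖) ^ 2)
    (by nlinarith) (fun n => by
      have := hle n
      nlinarith [hρ0 n]) hz2 c hc
end
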